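/- If n balls are thrown independently and uniformly into d bins with μ = n/d ≥ 1, and z > 1 satisfies z^z = n, then the probability that some bin load is at least μ·e·z is at most 2/n. -/

import Mathlib

open Finset

open scoped Classical in
lemma bin_count (n d k : ℕ) (b : Fin d) :
    (Finset.univ.filter fun ω : Fin n → Fin d =>
        k ≤ (Finset.univ.filter fun i => ω i = b).card).card
      ≤ n.choose k * d ^ (n - k) := by
  have hsub : (Finset.univ.filter fun ω : Fin n → Fin d =>
        k ≤ (Finset.univ.filter fun i => ω i = b).card)
      ⊆ ((Finset.univ : Finset (Fin n)).powersetCard k).biUnion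
        (fun S => Finset.univ.filter fun ω : Fin n → Fin d => ∀ i ∈ S, ω i = b) := by
    intro ω hω
    simp only [mem_filter, mem_univ, true_and] at hω
    obtain ⟨S, hS, hScard⟩ := Finset.exists_subset_card_eq hω
    refine mem_biUnion.2 ⟨S, ?_, ?_⟩
    · simp [Finset.mem_powersetCard, hScard]
    · simp only [mem_filter, mem_univ, true_and]
      exact fun i hi => (mem_filter.1 (hS hi)).2
  refine (Finset.card_le_card hsub).trans ((Finset.card_biUnion_le).trans ?_)
  have hbound : ∀ S ∈ (Finset.univ : Finset (Fin n)).powersetCard k,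
      (Finset.univ.filter fun ω : Fin n → Fin d => ∀ i ∈ S, ω i = b).card ≤ d ^ (n - k) := by
    intro S hS
    have hScard : S.card = k := (Finset.mem_powersetCard.1 hS).2
    have := Finset.card_le_card_of_injOn
      (s := Finset.univ.filter fun ω : Fin n → Fin d => ∀ i ∈ S, ω i = b)
      (t := (Finset.univ : Finset (((Finset.univ \ S : Finset (Fin n)) : Type) → Fin d)))
      (f := fun (ω : Fin n → Fin d) (i : ((Finset.univ \ S : Finset (Fin n)) : Type)) => ω i)
      (fun ω _ => Finset.mem_univ _)
      ?_
    · refine this.trans_eq ?_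
      rw [Finset.card_univ, Fintype.card_fun, Fintype.card_coe, Fintype.card_fin,
        Finset.card_sdiff_of_subset (Finset.subset_univ S), Finset.card_univ, Fintype.card_fin, hScard]
    · intro ω1 h1 ω2 h2 h
      simp only [Finset.coe_filter, Set.mem_setOf_eq, mem_univ, true_and] at h1 h2
      funext i
      by_cases hi : i ∈ S
      · rw [h1 i hi, h2 i hi]
      · exact congrFun h ⟨i, by simp [hi]⟩
  calc ∑ S ∈ (Finset.univ : Finset (Fin n)).powersetCard k,
        (Finset.univ.filter fun ω : Fin n → Fin d => ∀ i ∈ S, ω i = b).card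
      ≤ ∑ _S ∈ (Finset.univ : Finset (Fin n)).powersetCard k, d ^ (n - k) :=
        Finset.sum_le_sum hbound
    _ = n.choose k * d ^ (n - k) := by
        rw [Finset.sum_const, Finset.card_powersetCard, Finset.card_univ, Fintype.card_fin,
          smul_eq_mul]

open scoped Classical in
/-- If `n` balls are thrown independently and uniformly into `d` bins with
`μ = n/d ≥ 1`, and `z > 1` satisfies `z^z = n`, then the probability that some bin
load is at least `μ·e·z` is at most `2/n`. -/
theorem stmt16 (n d : ℕ) (hd : 0 < d) (hμ : 1 ≤ (n : ℝ) / d) (z : ℝ) (hz : 1 < z)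
    (hzn : z ^ z = (n : ℝ)) :
    ((Finset.univ.filter fun ω : Fin n → Fin d =>
        ∃ b : Fin d, ((n : ℝ) / d) * (Real.exp 1 * z)
          ≤ ((Finset.univ.filter fun k => ω k = b).card : ℝ)).card : ℝ) / (d : ℝ) ^ n
      ≤ 2 / n := by
  have hd0 : (0:ℝ) < d := by exact_mod_cast hd
  have hz0 : (0:ℝ) < z := by linarith
  have hn1 : (1:ℝ) < n := by
    rw [← hzn]; exact Real.one_lt_rpow_iff_of_pos hz0 |>.2 (Or.inl ⟨hz, hz0⟩)
  have hn2 : (2:ℕ) ≤ n := by exact_mod_cast (by exact_mod_cast hn1 : (1:ℕ) < n)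
  have hn0 : (0:ℝ) < n := by linarith
  have hdn : (d:ℝ) ≤ n := by
    have := (one_le_div hd0).1 hμ
    linarith
  have he2 : (2:ℝ) ≤ Real.exp 1 := by
    have := Real.add_one_le_exp 1; linarith
  have he0 : (0:ℝ) < Real.exp 1 := Real.exp_pos 1
  set μ : ℝ := (n : ℝ) / d with hμdef
  have hμ0 : 0 < μ := by positivity
  set k : ℕ := ⌈μ * (Real.exp 1 * z)⌉₊ with hk
  have hμez : μ * (Real.exp 1 * z) ≤ (k : ℝ) := Nat.le_ceil _
  have hezk : Real.exp 1 * z ≤ (k : ℝ) := by nlinarith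
  have hk0 : 0 < (k : ℝ) := by nlinarith
  have hkpos : 0 < k := by exact_mod_cast hk0
  -- Step 1 + 2 : card bound
  have hcard : ((Finset.univ.filter fun ω : Fin n → Fin d =>
        ∃ b : Fin d, μ * (Real.exp 1 * z)
          ≤ ((Finset.univ.filter fun i => ω i = b).card : ℝ)).card : ℝ)
      ≤ (d : ℝ) * (n.choose k * (d:ℝ) ^ (n - k)) := by
    have hsub : (Finset.univ.filter fun ω : Fin n → Fin d =>
        ∃ b : Fin d, μ * (Real.exp 1 * z)
          ≤ ((Finset.univ.filter fun i => ω i = b).card : ℝ))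
        ⊆ (Finset.univ : Finset (Fin d)).biUnion
          (fun b => Finset.univ.filter fun ω : Fin n → Fin d =>
            k ≤ (Finset.univ.filter fun i => ω i = b).card) := by
      intro ω hω
      simp only [mem_filter, mem_univ, true_and] at hω
      obtain ⟨b, hb⟩ := hω
      exact mem_biUnion.2 ⟨b, mem_univ _,
        by simp only [mem_filter, mem_univ, true_and]; exact Nat.ceil_le.2 hb⟩
    have h1 := Finset.card_le_card hsub
    have h2 := Finset.card_biUnion_le (s := (Finset.univ : Finset (Fin d)))
      (t := fun b => Finset.univ.filter fun ω : Fin n → Fin d =>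
            k ≤ (Finset.univ.filter fun i => ω i = b).card)
    have h3 : ∑ b : Fin d, (Finset.univ.filter fun ω : Fin n → Fin d =>
            k ≤ (Finset.univ.filter fun i => ω i = b).card).card
        ≤ d * (n.choose k * d ^ (n - k)) := by
      calc _ ≤ ∑ _b : Fin d, n.choose k * d ^ (n - k) :=
            Finset.sum_le_sum (fun b _ => bin_count n d k b)
        _ = d * (n.choose k * d ^ (n - k)) := by
            rw [Finset.sum_const, Finset.card_univ, Fintype.card_fin, smul_eq_mul]
      
    have := (h1.trans h2).trans h3
    calc ((Finset.univ.filter fun ω : Fin n → Fin d =>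
        ∃ b : Fin d, μ * (Real.exp 1 * z)
          ≤ ((Finset.univ.filter fun i => ω i = b).card : ℝ)).card : ℝ)
        ≤ ((d * (n.choose k * d ^ (n - k)) : ℕ) : ℝ) := by exact_mod_cast this
      _ = (d : ℝ) * (n.choose k * (d:ℝ) ^ (n - k)) := by push_cast; ring
  by_cases hkn : k ≤ n
  · -- main case
    have hdpow : (0:ℝ) < (d:ℝ) ^ n := by positivity
    have hstep : ((Finset.univ.filter fun ω : Fin n → Fin d =>
        ∃ b : Fin d, μ * (Real.exp 1 * z)
          ≤ ((Finset.univ.filter fun i => ω i = b).card : ℝ)).card : ℝ) / (d : ℝ) ^ n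
        ≤ (d:ℝ) * ((n.choose k : ℝ) / (d:ℝ)^k) := by
      rw [div_le_iff₀ hdpow]
      refine hcard.trans (le_of_eq ?_)
      rw [show n = (n - k) + k from (Nat.sub_add_cancel hkn).symm, pow_add, Nat.add_sub_cancel]
      field_simp
    -- choose bound
    have hchoose : (n.choose k : ℝ) ≤ (Real.exp 1 * n / k) ^ k := by
      have h1 : (n.choose k : ℝ) ≤ (n:ℝ) ^ k / (Nat.factorial k) :=
        by exact_mod_cast Nat.choose_le_pow_div k n
      have h2 : (k:ℝ) ^ k / (Nat.factorial k) ≤ Real.exp k :=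
        Real.pow_div_factorial_le_exp _ (by positivity) k
      have hf0 : (0:ℝ) < (Nat.factorial k : ℝ) := by exact_mod_cast Nat.factorial_pos k
      have h3 : (k:ℝ) ^ k ≤ Real.exp 1 ^ k * (Nat.factorial k) := by
        rw [Real.exp_one_pow]
        calc (k:ℝ)^k = ((k:ℝ)^k / (Nat.factorial k)) * Nat.factorial k := by field_simp
          _ ≤ Real.exp k * Nat.factorial k := by
              exact mul_le_mul_of_nonneg_right h2 hf0.le
      refine h1.trans ?_
      rw [div_pow, mul_pow, div_le_div_iff₀ hf0 (by positivity)]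
      calc (n:ℝ)^k * (k:ℝ)^k ≤ (n:ℝ)^k * (Real.exp 1 ^ k * Nat.factorial k) := by
            exact mul_le_mul_of_nonneg_left h3 (by positivity)
        _ = Real.exp 1 ^ k * (n:ℝ)^k * Nat.factorial k := by ring
    -- combine
    have hkey : Real.exp 1 * ↑n * z ≤ ↑k * ↑d := by
      have h := mul_le_mul_of_nonneg_right hμez hd0.le
      have h2 : μ * (Real.exp 1 * z) * d = Real.exp 1 * n * z := by
        rw [hμdef]; field_simp
      linarith [h2 ▸ h]
    have hbase : Real.exp 1 * n / k / d ≤ 1 / z := by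
      rw [div_div, div_le_div_iff₀ (by positivity) hz0, one_mul]
      nlinarith
    have hpow2 : ((n.choose k : ℝ) / (d:ℝ)^k) ≤ (1/z) ^ k := by
      calc (n.choose k : ℝ) / (d:ℝ)^k ≤ (Real.exp 1 * n / k) ^ k / (d:ℝ)^k := by
            gcongr
        _ = (Real.exp 1 * n / k / d) ^ k := by rw [← div_pow]
        _ ≤ (1/z) ^ k := pow_le_pow_left₀ (by positivity) hbase k
    have hzpow : (1/z) ^ k ≤ 1 / (n:ℝ)^2 := by
      have h1 : ((1/z) ^ k : ℝ) = (1/z) ^ (k:ℝ) := by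
        rw [Real.rpow_natCast]
      have h2 : (1/z) ^ (k:ℝ) ≤ (1/z) ^ (Real.exp 1 * z) :=
        Real.rpow_le_rpow_of_exponent_ge (by positivity)
          (by rw [div_le_one hz0]; linarith) hezk
      have h3 : (1/z) ^ (Real.exp 1 * z) = 1 / (n:ℝ) ^ (Real.exp 1) := by
        rw [Real.div_rpow zero_le_one hz0.le, Real.one_rpow,
          show Real.exp 1 * z = z * Real.exp 1 by ring,
          Real.rpow_mul hz0.le, hzn]
      have h4 : (n:ℝ) ^ (2:ℝ) ≤ (n:ℝ) ^ (Real.exp 1) :=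
        Real.rpow_le_rpow_of_exponent_le hn1.le he2
      have h5 : (n:ℝ) ^ (2:ℝ) = (n:ℝ)^2 := by
        rw [show (2:ℝ) = ((2:ℕ):ℝ) by norm_num, Real.rpow_natCast]
      rw [h1]
      refine h2.trans (le_of_eq h3 |>.trans ?_)
      rw [div_le_div_iff₀ (by positivity) (by positivity), one_mul, one_mul, ← h5]
      exact h4
    have hfin : (d:ℝ) * ((n.choose k : ℝ) / (d:ℝ)^k) ≤ 2 / n := by
      calc (d:ℝ) * ((n.choose k : ℝ) / (d:ℝ)^k) ≤ (n:ℝ) * (1/(n:ℝ)^2) := by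
            refine mul_le_mul hdn (hpow2.trans hzpow) (by positivity) hn0.le
        _ = 1 / n := by field_simp
        _ ≤ 2 / n := by
            rw [div_le_div_iff₀ hn0 hn0]; nlinarith
    exact hstep.trans hfin
  · -- k > n : event is empty
    push_neg at hkn
    have : n.choose k = 0 := Nat.choose_eq_zero_of_lt hkn
    rw [this] at hcard
    simp only [Nat.cast_zero, zero_mul, mul_zero] at hcard
    have h0 : ((Finset.univ.filter fun ω : Fin n → Fin d =>
        ∃ b : Fin d, μ * (Real.exp 1 * z)
          ≤ ((Finset.univ.filter fun i => ω i = b).card : ℝ)).card : ℝ) = 0 :=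
      le_antisymm hcard (Nat.cast_nonneg _)
    rw [h0, zero_div]
    positivity
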